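/- Let Ω be a nonempty finite set, U ⊆ ℝ^k an open set, θ0 ∈ U, and p : U × Ω → ℝ such that for every θ ∈ U the function p(θ,·) is a pmf on Ω with p(θ,x) > 0 for all x, and for every x ∈ Ω the map θ ↦ p(θ,x) is twice continuously differentiable on U. Define the Kullback–Leibler divergence F(θ) = Σ_{x∈Ω} p(θ0,x) · log( p(θ0,x) / p(θ,x) ) and the Fisher information matrix I(θ0) = − Σ_{x∈Ω} p(θ0,x) · Hess_θ log p(θ,x) |_{θ=θ0}. Then F admits the second-order expansion F(θ) = (1/2) (θ−θ0)ᵀ I(θ0) (θ−θ0) + o(‖θ−θ0‖²) as θ → θ0; in particular F(θ0) = 0, ∇F(θ0) = 0, and the Hessian of F at θ0 equals I(θ0). -/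

import Mathlib

open Asymptotics Filter

/-- A probability mass function on a finite set. -/
def IsPmf {Ω : Type*} [Fintype Ω] (p : Ω → ℝ) : Prop :=
  (∀ x, 0 ≤ p x) ∧ ∑ x, p x = 1

theorem taylor_two {E : Type*} [NormedAddCommGroup E] [NormedSpace ℝ E]
    {f : E → ℝ} {a : E} (hf : ContDiffAt ℝ 2 f a) :
    (fun x => f x - f a - fderiv ℝ f a (x - a)
      - (1 / 2) * fderiv ℝ (fderiv ℝ f) a (x - a) (x - a)) =o[nhds a]
      (fun x => ‖x - a‖ ^ 2) := by
  set L := fderiv ℝ f a with hL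
  set H := fderiv ℝ (fderiv ℝ f) a with hH
  have hsymm : ∀ v w, H v w = H w v := hf.isSymmSndFDerivAt (by simp [minSmoothness_of_isRCLikeNormedField])
  obtain ⟨s, hs_nhds, hs⟩ := hf.contDiffOn le_rfl (by simp)
  obtain ⟨r, hr, hball⟩ := Metric.mem_nhds_iff.1 hs_nhds
  have hdiff : ∀ y ∈ Metric.ball a r, HasFDerivAt f (fderiv ℝ f y) y := by
    intro y hy
    exact ((hs.differentiableOn two_ne_zero).differentiableAt
      (Filter.mem_of_superset (Metric.isOpen_ball.mem_nhds hy) hball)).hasFDerivAt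
  have hφ : HasFDerivAt (fderiv ℝ f) H a :=
    ((hf.fderiv_right (m := 1) le_rfl).differentiableAt one_ne_zero).hasFDerivAt
  set g : E → ℝ := fun x => f x - f a - L (x - a) - (1 / 2) * H (x - a) (x - a) with hg
  have hga : g a = 0 := by simp [hg]
  have hgderiv : ∀ y ∈ Metric.ball a r,
      HasFDerivAt g (fderiv ℝ f y - L - H (y - a)) y := by
    intro y hy
    have hsub : HasFDerivAt (fun x : E => x - a) (ContinuousLinearMap.id ℝ E) y :=
      (hasFDerivAt_id y).sub_const a
    have h1 : HasFDerivAt (fun x : E => L (x - a)) L y := by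
      have := (L.hasFDerivAt (x := y - a)).comp y hsub
      simpa only [Function.comp_def, ContinuousLinearMap.comp_id] using this
    have h2' : HasFDerivAt (fun x : E => H (x - a) (x - a))
        (H.precompR E (y - a) (ContinuousLinearMap.id ℝ E)
          + H.precompL E (ContinuousLinearMap.id ℝ E) (y - a)) y :=
      H.hasFDerivAt_of_bilinear hsub hsub
    have h2 : HasFDerivAt (fun x : E => (1 / 2 : ℝ) * H (x - a) (x - a))
        (H (y - a)) y := by
      have h3 := h2'.const_mul (1 / 2 : ℝ)
      refine h3.congr_fderiv ?_
      ext v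
      simp only [ContinuousLinearMap.smul_apply, ContinuousLinearMap.add_apply,
        ContinuousLinearMap.precompR_apply, ContinuousLinearMap.precompL_apply,
        ContinuousLinearMap.coe_id', id_eq, smul_eq_mul, ContinuousLinearMap.compL_apply,
        ContinuousLinearMap.comp_apply, ContinuousLinearMap.coe_comp']
      rw [hsymm v (y - a)]
      ring
    have h4 := (((hdiff y hy).sub_const (f a)).sub h1).sub h2
    exact h4
  rw [isLittleO_iff]
  intro ε hε
  have hψ : (fun y => fderiv ℝ f y - L - H (y - a)) =o[nhds a] (fun y => y - a) :=
    hφ.isLittleO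
  rw [isLittleO_iff] at hψ
  have hball2 : Metric.ball a r ∈ nhds a := Metric.isOpen_ball.mem_nhds (Metric.mem_ball_self hr)
  obtain ⟨δ, hδpos, hδ⟩ := Metric.mem_nhds_iff.1 (Filter.inter_mem hball2 (hψ hε))
  have hδball : Metric.ball a δ ∈ nhds a := Metric.isOpen_ball.mem_nhds (Metric.mem_ball_self hδpos)
  filter_upwards [hδball] with x hx
  -- bound ‖g x‖ ≤ ε ‖x - a‖ ^ 2 via the mean value inequality on the segment [a, x]
  have hseg : segment ℝ a x ⊆ Metric.ball a δ :=
    (convex_ball a δ).segment_subset (Metric.mem_ball_self hδpos) hx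
  have key : ‖g x - g a‖ ≤ (ε * ‖x - a‖) * ‖x - a‖ := by
    apply Convex.norm_image_sub_le_of_norm_hasFDerivWithin_le
      (f' := fun y => fderiv ℝ f y - L - H (y - a)) (fun y hy => ?_) (fun y hy => ?_)
      (convex_segment a x) (left_mem_segment ℝ a x) (right_mem_segment ℝ a x)
    · exact ((hgderiv y ((hδ (hseg hy)).1)).hasFDerivWithinAt)
    · have hyδ := hδ (hseg hy)
      have hb : ‖fderiv ℝ f y - L - H (y - a)‖ ≤ ε * ‖y - a‖ := by
        simpa using hyδ.2
      have hle : ‖y - a‖ ≤ ‖x - a‖ := by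
        obtain ⟨u, v, hu, hv, huv, rfl⟩ := hy
        have : u • a + v • x - a = v • (x - a) := by
          rw [smul_sub]
          have : u • a = a - v • a := by rw [eq_sub_iff_add_eq, ← add_smul, huv, one_smul]
          rw [this]; abel
        rw [this, norm_smul, Real.norm_eq_abs, abs_of_nonneg hv]
        nlinarith [norm_nonneg (x - a)]
      exact hb.trans (mul_le_mul_of_nonneg_left hle (le_of_lt hε))
  rw [hga, sub_zero] at key
  calc ‖g x‖ ≤ (ε * ‖x - a‖) * ‖x - a‖ := key
    _ = ε * ‖‖x - a‖ ^ 2‖ := by rw [norm_pow, norm_norm]; ring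


/-- Second-order expansion of the Kullback–Leibler divergence
`F(θ) = Σ_x p(θ0,x)·log(p(θ0,x)/p(θ,x))` around `θ0`: its value and gradient vanish at
`θ0`, its Hessian at `θ0` equals the Fisher information matrix
`I(θ0) = −Σ_x p(θ0,x)·Hess_θ log p(θ,x)|_{θ0}`, and
`F(θ) = (1/2)(θ−θ0)ᵀ I(θ0) (θ−θ0) + o(‖θ−θ0‖²)` as `θ → θ0`. -/
theorem kl_second_order_expansion {k : ℕ} {Ω : Type*} [Fintype Ω] [Nonempty Ω]
    (U : Set (EuclideanSpace ℝ (Fin k))) (hU : IsOpen U)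
    (θ0 : EuclideanSpace ℝ (Fin k)) (hθ0 : θ0 ∈ U)
    (p : EuclideanSpace ℝ (Fin k) → Ω → ℝ)
    (hpmf : ∀ θ ∈ U, IsPmf (p θ))
    (hpos : ∀ θ ∈ U, ∀ x, 0 < p θ x)
    (hC2 : ∀ x, ContDiffOn ℝ 2 (fun θ => p θ x) U)
    (F : EuclideanSpace ℝ (Fin k) → ℝ)
    (hF : F = fun θ => ∑ x, p θ0 x * Real.log (p θ0 x / p θ x))
    (I : EuclideanSpace ℝ (Fin k) →L[ℝ] EuclideanSpace ℝ (Fin k) →L[ℝ] ℝ)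
    (hI : I = -∑ x, p θ0 x •
        fderiv ℝ (fun θ => fderiv ℝ (fun θ' => Real.log (p θ' x)) θ) θ0) :
    F θ0 = 0 ∧
    fderiv ℝ F θ0 = 0 ∧
    fderiv ℝ (fun θ => fderiv ℝ F θ) θ0 = I ∧
    (fun θ => F θ - (1 / 2) * I (θ - θ0) (θ - θ0)) =o[nhds θ0]
      (fun θ => ‖θ - θ0‖ ^ 2) := by
  set c : ℝ := ∑ x, p θ0 x * Real.log (p θ0 x) with hc
  set G : EuclideanSpace ℝ (Fin k) → ℝ := fun θ => ∑ x, p θ0 x * Real.log (p θ x) with hG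
  have hlC2 : ∀ x, ContDiffOn ℝ 2 (fun θ => Real.log (p θ x)) U :=
    fun x => (hC2 x).log (fun θ hθ => (hpos θ hθ x).ne')
  have hFU : ∀ θ ∈ U, F θ = c - G θ := by
    intro θ hθ
    rw [hF, hG, hc]
    rw [← Finset.sum_sub_distrib]
    refine Finset.sum_congr rfl fun x _ => ?_
    rw [Real.log_div (hpos θ0 hθ0 x).ne' (hpos θ hθ x).ne']
    ring
  have hFeq : F =ᶠ[nhds θ0] (fun θ => c - G θ) :=
    Filter.eventuallyEq_of_mem (hU.mem_nhds hθ0) hFU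
  -- differentiability of p
  have hp_diff : ∀ θ ∈ U, ∀ x,
      HasFDerivAt (fun θ' => p θ' x) (fderiv ℝ (fun θ' => p θ' x) θ) θ := by
    intro θ hθ x
    exact (((hC2 x).differentiableOn two_ne_zero).differentiableAt
      (hU.mem_nhds hθ)).hasFDerivAt
  have hlog_deriv : ∀ θ ∈ U, ∀ x,
      HasFDerivAt (fun θ' => Real.log (p θ' x))
        ((p θ x)⁻¹ • fderiv ℝ (fun θ' => p θ' x) θ) θ :=
    fun θ hθ x => (hp_diff θ hθ x).log (hpos θ hθ x).ne'
  have hGd : ∀ θ ∈ U, HasFDerivAt G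
      (∑ x, p θ0 x • fderiv ℝ (fun θ' => Real.log (p θ' x)) θ) θ := by
    intro θ hθ
    apply HasFDerivAt.fun_sum
    intro x _
    have h := (hlog_deriv θ hθ x).const_mul (p θ0 x)
    rwa [(hlog_deriv θ hθ x).fderiv]
  have hFder : ∀ θ ∈ U, HasFDerivAt F
      (-(∑ x, p θ0 x • fderiv ℝ (fun θ' => Real.log (p θ' x)) θ)) θ := by
    intro θ hθ
    have h := (hasFDerivAt_const c θ).sub (hGd θ hθ)
    rw [zero_sub] at h
    exact h.congr_of_eventuallyEq (Filter.eventuallyEq_of_mem (hU.mem_nhds hθ) hFU)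
  -- sum of fderivs of p vanishes
  have hsum0 : ∑ x, fderiv ℝ (fun θ' => p θ' x) θ0 = 0 := by
    have hsum1 : HasFDerivAt (fun θ => ∑ x, p θ x)
        (∑ x, fderiv ℝ (fun θ' => p θ' x) θ0) θ0 :=
      HasFDerivAt.fun_sum fun x _ => hp_diff θ0 hθ0 x
    have heq1 : (fun θ => ∑ x, p θ x) =ᶠ[nhds θ0] (fun _ => (1 : ℝ)) :=
      Filter.eventuallyEq_of_mem (hU.mem_nhds hθ0) (fun θ hθ => (hpmf θ hθ).2)
    have hconst : HasFDerivAt (fun _ : EuclideanSpace ℝ (Fin k) => (1 : ℝ))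
        (∑ x, fderiv ℝ (fun θ' => p θ' x) θ0) θ0 :=
      hsum1.congr_of_eventuallyEq heq1.symm
    exact hconst.unique (hasFDerivAt_const 1 θ0)
  have hterm : ∀ x, p θ0 x • fderiv ℝ (fun θ' => Real.log (p θ' x)) θ0
      = fderiv ℝ (fun θ' => p θ' x) θ0 := by
    intro x
    rw [(hlog_deriv θ0 hθ0 x).fderiv, smul_smul,
      mul_inv_cancel₀ (hpos θ0 hθ0 x).ne', one_smul]
  -- Part 1
  have h1 : F θ0 = 0 := by
    rw [hF]
    exact Finset.sum_eq_zero fun x _ => by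
      rw [div_self (hpos θ0 hθ0 x).ne', Real.log_one, mul_zero]
  -- Part 2
  have h2 : fderiv ℝ F θ0 = 0 := by
    rw [(hFder θ0 hθ0).fderiv]
    simp only [hterm, hsum0, neg_zero]
  -- Part 3
  have hl_fd_diff : ∀ x, DifferentiableAt ℝ
      (fun θ => fderiv ℝ (fun θ' => Real.log (p θ' x)) θ) θ0 := by
    intro x
    have := ((hlC2 x).fderiv_of_isOpen hU (m := 1) (by norm_num)).differentiableOn one_ne_zero
    exact this.differentiableAt (hU.mem_nhds hθ0)
  have h3 : fderiv ℝ (fun θ => fderiv ℝ F θ) θ0 = I := by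
    have heq2 : (fun θ => fderiv ℝ F θ) =ᶠ[nhds θ0]
        (fun θ => -(∑ x, p θ0 x • fderiv ℝ (fun θ' => Real.log (p θ' x)) θ)) :=
      Filter.eventuallyEq_of_mem (hU.mem_nhds hθ0) (fun θ hθ => (hFder θ hθ).fderiv)
    rw [heq2.fderiv_eq, fderiv_fun_neg,
      fderiv_fun_sum (fun x _ => (hl_fd_diff x).fun_const_smul (p θ0 x)), hI]
    congr 1
    refine Finset.sum_congr rfl fun x _ => ?_
    rw [fderiv_fun_const_smul (hl_fd_diff x)]
  refine ⟨h1, h2, h3, ?_⟩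
  -- Part 4
  have hFC2 : ContDiffAt ℝ 2 F θ0 := by
    have hGC2 : ContDiffOn ℝ 2 (fun θ => c - G θ) U :=
      contDiffOn_const.sub (ContDiffOn.sum fun x _ => contDiffOn_const.mul (hlC2 x))
    exact (hGC2.contDiffAt (hU.mem_nhds hθ0)).congr_of_eventuallyEq hFeq
  have ht := taylor_two hFC2
  rw [h1, h2] at ht
  have h3' : fderiv ℝ (fderiv ℝ F) θ0 = I := h3
  rw [h3'] at ht
  exact ht.congr (fun x => by simp only [sub_zero, ContinuousLinearMap.zero_apply]) (fun x => rfl)
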